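/- For the pure odd-even mode u_j = (−1)^j, Shen's sixth-order conservative scheme returns exactly zero at every point j, i.e., the sawtooth mode lies in the kernel of the discrete diffusion operator, while the sixth-order α-damping scheme returns (−272/45)(−1)^j/Δx² ≠ 0. -/
import Mathlib


open Real

/-- Sixth-order central-difference cell-center gradient applied to a sequence. -/
noncomputable def grad6U (Δx : ℝ) (u : ℤ → ℂ) (m : ℤ) : ℂ :=
  (45 * (u (m+1) - u (m-1)) - 9 * (u (m+2) - u (m-2)) + (u (m+3) - u (m-3)))
    / (60 * (Δx : ℂ))

/-- Shen's interface numerical flux `F̂_{j+1/2}`. -/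
noncomputable def shenFluxU (Δx : ℝ) (u : ℤ → ℂ) (j : ℤ) : ℂ :=
  (3 * grad6U Δx u (j-2) - 25 * grad6U Δx u (j-1) + 150 * grad6U Δx u j
    + 150 * grad6U Δx u (j+1) - 25 * grad6U Δx u (j+2) + 3 * grad6U Δx u (j+3)) / 256

/-- Shen's sixth-order conservative approximation of the second derivative at cell `j`. -/
noncomputable def shenSchemeU (Δx : ℝ) (u : ℤ → ℂ) (j : ℤ) : ℂ :=
  ((75/64) * (shenFluxU Δx u j - shenFluxU Δx u (j-1))
    + (-25/384) * (shenFluxU Δx u (j+1) - shenFluxU Δx u (j-2))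
    + (3/640) * (shenFluxU Δx u (j+2) - shenFluxU Δx u (j-3))) / Δx

/-- Fourth-order central-difference cell-center gradient applied to a sequence. -/
noncomputable def grad4U (Δx : ℝ) (u : ℤ → ℂ) (m : ℤ) : ℂ :=
  (8 * (u (m+1) - u (m-1)) - (u (m+2) - u (m-2))) / (12 * (Δx : ℂ))

/-- Left quadratic reconstruction at face `j+1/2`. -/
noncomputable def uLrecU (β Δx : ℝ) (u : ℤ → ℂ) (j : ℤ) : ℂ :=
  u j + grad4U Δx u j * Δx / 2 + (β : ℂ) * (u (j+1) - 2 * u j + u (j-1))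

/-- Right quadratic reconstruction at face `j+1/2`. -/
noncomputable def uRrecU (β Δx : ℝ) (u : ℤ → ℂ) (j : ℤ) : ℂ :=
  u (j+1) - grad4U Δx u (j+1) * Δx / 2 + (β : ℂ) * (u (j+2) - 2 * u (j+1) + u j)

/-- α-damping interface gradient (numerical flux) at face `j+1/2`. -/
noncomputable def dampFluxU (α β Δx : ℝ) (u : ℤ → ℂ) (j : ℤ) : ℂ :=
  (grad4U Δx u j + grad4U Δx u (j+1)) / 2
    + ((α / (2 * Δx) : ℝ) : ℂ) * (uRrecU β Δx u j - uLrecU β Δx u j)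

/-- The α-damping conservative approximation of the second derivative at cell `j`. -/
noncomputable def dampSchemeU (α β Δx : ℝ) (u : ℤ → ℂ) (j : ℤ) : ℂ :=
  (dampFluxU α β Δx u j - dampFluxU α β Δx u (j-1)) / Δx

lemma saw_pow (m k : ℤ) : ((-1:ℂ))^(m+k) = (-1:ℂ)^m * (-1:ℂ)^k :=
  zpow_add₀ (by norm_num) m k

lemma saw_pow' (m k : ℤ) : ((-1:ℂ))^(m-k) = (-1:ℂ)^m / (-1:ℂ)^k :=
  zpow_sub₀ (by norm_num) m k

lemma grad6_saw (Δx : ℝ) (m : ℤ) : grad6U Δx (fun m => (-1 : ℂ)^m) m = 0 := by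
  simp only [grad6U, saw_pow, saw_pow']
  rw [div_eq_zero_iff]; left; ring

lemma grad4_saw (Δx : ℝ) (m : ℤ) : grad4U Δx (fun m => (-1 : ℂ)^m) m = 0 := by
  simp only [grad4U, saw_pow, saw_pow']
  rw [div_eq_zero_iff]; left; ring

lemma dampFlux_saw (Δx : ℝ) (j : ℤ) :
    dampFluxU (38/15) (-11/228) Δx (fun m => (-1 : ℂ)^m) j
      = (-136/45 : ℂ) * (-1:ℂ)^j / Δx := by
  simp only [dampFluxU, uRrecU, uLrecU, grad4_saw, saw_pow, saw_pow']
  push_cast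
  by_cases h : Δx = 0
  · simp [h]
  · have hΔ : (Δx:ℂ) ≠ 0 := by exact_mod_cast Complex.ofReal_ne_zero.mpr h
    field_simp
    ring

/-- on the pure odd-even (sawtooth) mode `u_j = (−1)^j`, Shen's scheme is
exactly zero at every point, while the sixth-order α-damping scheme returns
`(−272/45)(−1)^j/Δx² ≠ 0`. -/
theorem schemes_on_sawtooth (Δx : ℝ) (hΔx : Δx ≠ 0) (j : ℤ) :
    shenSchemeU Δx (fun m => (-1 : ℂ)^m) j = 0
    ∧ dampSchemeU (38/15) (-11/228) Δx (fun m => (-1 : ℂ)^m) j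
        = (-272/45 : ℂ) * (-1 : ℂ)^j / ((Δx : ℂ)^2)
    ∧ (-272/45 : ℂ) * (-1 : ℂ)^j / ((Δx : ℂ)^2) ≠ 0 := by
  have hΔ : (Δx:ℂ) ≠ 0 := by exact_mod_cast Complex.ofReal_ne_zero.mpr hΔx
  refine ⟨?_, ?_, ?_⟩
  · simp [shenSchemeU, shenFluxU, grad6_saw]
  · simp only [dampSchemeU, dampFlux_saw, saw_pow']
    field_simp
    ring
  · apply div_ne_zero
    · exact mul_ne_zero (by norm_num) (zpow_ne_zero _ (by norm_num))
    · exact pow_ne_zero _ hΔ
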